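/- Let A be a smooth ℂ-algebra, B = A⊗A⊗A, τ the automorphism of B swapping the last two tensor factors, J₃ = I₁₂ ∩ I₁₃ ∩ I₂₃, and σ : A⊗A → A⊗A the swap of the two factors. Define φ : B^τ → (A⊗A) ⊕ (A⊗A) by φ(b) = (μ₁₂(b), σ(μ₂₃(b))), let M₀ := {(s,t) ∈ (A⊗A) ⊕ (A⊗A) : μ(s) = μ(t)}, and let ψ : (A⊗A) ⊕ (A⊗A) → K/K² be the ℂ-linear map ψ(a⊗u, b⊗v) = class of 2(a⊗u) − 2(au⊗1) − (v⊗b) + (vb⊗1) (under K/K² ≅ Ω¹_{A/ℂ}, ψ(a⊗u, b⊗v) = 2a du − v db). Then φ(B^τ) ⊆ M₀ and the sequence 0 → J₃ ∩ B^τ → B^τ →^φ M₀ →^{ψ} K/K² → 0 is exact: ker φ = J₃ ∩ B^τ, the image of φ equals the kernel of ψ restricted to M₀, and ψ restricted to M₀ is surjective. -/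

import Mathlib

open scoped TensorProduct

noncomputable section

namespace DiagIdeals

variable (A : Type) [CommRing A] [Algebra ℂ A]

/-- `B = A ⊗ A ⊗ A` (the triple tensor product over ℂ, parenthesized to the left). -/
abbrev B3 := (A ⊗[ℂ] A) ⊗[ℂ] A

/-- The multiplication map `μ : A ⊗ A → A`. -/
abbrev mu : A ⊗[ℂ] A →ₐ[ℂ] A := Algebra.TensorProduct.lmul' ℂ

/-- `μ₁₂ : A⊗A⊗A → A⊗A`, multiplying the first and second tensor factors. -/
def mu12 : B3 A →ₐ[ℂ] A ⊗[ℂ] A :=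
  Algebra.TensorProduct.map (mu A) (AlgHom.id ℂ A)

/-- `μ₂₃ : A⊗A⊗A → A⊗A`, multiplying the second and third tensor factors. -/
def mu23 : B3 A →ₐ[ℂ] A ⊗[ℂ] A :=
  (Algebra.TensorProduct.map (AlgHom.id ℂ A) (mu A)).comp
    (Algebra.TensorProduct.assoc ℂ ℂ ℂ A A A).toAlgHom

/-- The automorphism of `A⊗A⊗A` exchanging the first two tensor factors. -/
def s12 : B3 A ≃ₐ[ℂ] B3 A :=
  Algebra.TensorProduct.congr (Algebra.TensorProduct.comm ℂ A A) AlgEquiv.refl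

/-- The automorphism of `A⊗A⊗A` exchanging the last two tensor factors. -/
def s23 : B3 A ≃ₐ[ℂ] B3 A :=
  (Algebra.TensorProduct.assoc ℂ ℂ ℂ A A A).trans
    ((Algebra.TensorProduct.congr AlgEquiv.refl (Algebra.TensorProduct.comm ℂ A A)).trans
      (Algebra.TensorProduct.assoc ℂ ℂ ℂ A A A).symm)

/-- `μ₁₃ : A⊗A⊗A → A⊗A`, multiplying the first and third tensor factors. -/
def mu13 : B3 A →ₐ[ℂ] A ⊗[ℂ] A := (mu12 A).comp (s23 A).toAlgHom

/-- The ideal `I₁₂ = ker μ₁₂` of the (1,2)-th pairwise diagonal. -/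
def I12 : Ideal (B3 A) := RingHom.ker (mu12 A)

/-- The ideal `I₁₃ = ker μ₁₃` of the (1,3)-th pairwise diagonal. -/
def I13 : Ideal (B3 A) := RingHom.ker (mu13 A)

/-- The ideal `I₂₃ = ker μ₂₃` of the (2,3)-th pairwise diagonal. -/
def I23 : Ideal (B3 A) := RingHom.ker (mu23 A)

/-- The ideal `J₃` of the big diagonal in `A⊗A⊗A`. -/
def J3 : Ideal (B3 A) := I12 A ⊓ I13 A ⊓ I23 A

/-- The set of `S₃`-invariant elements of `B = A⊗A⊗A`, for the action of `S₃`
permuting the tensor factors (invariance under the generating transpositions). -/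
def inv3 : Set (B3 A) := {b | s12 A b = b ∧ s23 A b = b}

/-- The linear map `(A⊗A) ⊕ (A⊗A) → A⊗A` sending `(a⊗u, b⊗v)` to
`2(a⊗u) − 2(au⊗1) − (v⊗b) + (vb⊗1)`. -/
def Gmap : (A ⊗[ℂ] A) × (A ⊗[ℂ] A) →ₗ[ℂ] A ⊗[ℂ] A :=
  (((2 : ℂ) • LinearMap.id - (2 : ℂ) • ((TensorProduct.mk ℂ A A).flip 1 ∘ₗ LinearMap.mul' ℂ A)) ∘ₗ
      LinearMap.fst ℂ (A ⊗[ℂ] A) (A ⊗[ℂ] A))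
    - (((TensorProduct.comm ℂ A A).toLinearMap
          - ((TensorProduct.mk ℂ A A).flip 1 ∘ₗ LinearMap.mul' ℂ A)) ∘ₗ
        LinearMap.snd ℂ (A ⊗[ℂ] A) (A ⊗[ℂ] A))

lemma lmul'_flip_mul' (x : A ⊗[ℂ] A) :
    Algebra.TensorProduct.lmul' (S := A) ℂ
        ((TensorProduct.mk ℂ A A).flip 1 (LinearMap.mul' ℂ A x)) =
      Algebra.TensorProduct.lmul' (S := A) ℂ x := by
  induction x using TensorProduct.induction_on with
  | zero => simp
  | tmul a b => simp [Algebra.TensorProduct.lmul'_apply_tmul]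
  | add x y hx hy => simp only [map_add, hx, hy]

lemma lmul'_comm (x : A ⊗[ℂ] A) :
    Algebra.TensorProduct.lmul' (S := A) ℂ (TensorProduct.comm ℂ A A x) =
      Algebra.TensorProduct.lmul' (S := A) ℂ x := by
  induction x using TensorProduct.induction_on with
  | zero => simp
  | tmul a b => simp [Algebra.TensorProduct.lmul'_apply_tmul, mul_comm]
  | add x y hx hy => simp only [map_add, hx, hy]

lemma Gmap_mem (p : (A ⊗[ℂ] A) × (A ⊗[ℂ] A)) :
    Gmap A p ∈ (KaehlerDifferential.ideal ℂ A).restrictScalars ℂ := by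
  obtain ⟨s, t⟩ := p
  simp only [Submodule.restrictScalars_mem, KaehlerDifferential.ideal, RingHom.mem_ker]
  simp only [Gmap, LinearMap.sub_apply, LinearMap.coe_comp, Function.comp_apply,
    LinearMap.fst_apply, LinearMap.snd_apply, LinearMap.smul_apply, LinearMap.id_apply,
    LinearEquiv.coe_coe, map_sub, map_smul]
  rw [lmul'_flip_mul', lmul'_flip_mul', lmul'_comm]
  simp

/-- The ℂ-linear map `ψ : (A⊗A) ⊕ (A⊗A) → K/K² = Ω[A⁄ℂ]` sending `(a⊗u, b⊗v)` to
the class of `2(a⊗u) − 2(au⊗1) − (v⊗b) + (vb⊗1)` (i.e. `2a du − v db`). -/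
def psi : (A ⊗[ℂ] A) × (A ⊗[ℂ] A) →ₗ[ℂ] Ω[A⁄ℂ] :=
  (((KaehlerDifferential.ideal ℂ A).toCotangent).restrictScalars ℂ).comp
    ((Gmap A).codRestrict ((KaehlerDifferential.ideal ℂ A).restrictScalars ℂ) (Gmap_mem A))

/-- `M₀ = {(s,t) : μ(s) = μ(t)}`. -/
def M0 : Submodule ℂ ((A ⊗[ℂ] A) × (A ⊗[ℂ] A)) :=
  LinearMap.ker
    ((LinearMap.mul' ℂ A ∘ₗ LinearMap.fst ℂ (A ⊗[ℂ] A) (A ⊗[ℂ] A))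
      - (LinearMap.mul' ℂ A ∘ₗ LinearMap.snd ℂ (A ⊗[ℂ] A) (A ⊗[ℂ] A)))

/-- `φ : B^τ → (A⊗A) ⊕ (A⊗A)`, `φ(b) = (μ₁₂(b), σ(μ₂₃(b)))` where `σ` swaps the
two factors of `A⊗A`. -/
def phi (b : B3 A) : (A ⊗[ℂ] A) × (A ⊗[ℂ] A) :=
  (mu12 A b, Algebra.TensorProduct.comm ℂ A A (mu23 A b))

lemma acomm_eq (x : A ⊗[ℂ] A) :
    Algebra.TensorProduct.comm ℂ A A x = TensorProduct.comm ℂ A A x := rfl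

lemma s23_tmul (p q r : A) : s23 A ((p ⊗ₜ q) ⊗ₜ r) = (p ⊗ₜ r) ⊗ₜ q := by simp [s23]

lemma mu12_tmul (p q r : A) : mu12 A ((p ⊗ₜ q) ⊗ₜ r) = (p*q) ⊗ₜ r := by
  simp [mu12, Algebra.TensorProduct.lmul'_apply_tmul]

lemma mu23_tmul (p q r : A) : mu23 A ((p ⊗ₜ q) ⊗ₜ r) = p ⊗ₜ (q*r) := by
  simp [mu23, Algebra.TensorProduct.lmul'_apply_tmul]

lemma mu12_incl (x : A ⊗[ℂ] A) : mu12 A (x ⊗ₜ 1) = (mu A x) ⊗ₜ 1 := by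
  simp [mu12]

lemma mu23_incl (x : A ⊗[ℂ] A) : mu23 A (x ⊗ₜ 1) = x := by
  induction x using TensorProduct.induction_on with
  | zero => simp
  | tmul a b => simp [mu23_tmul]
  | add x y hx hy => simp [TensorProduct.add_tmul, hx, hy]

lemma mu23_s23 (b : B3 A) : mu23 A (s23 A b) = mu23 A b := by
  induction b using TensorProduct.induction_on with
  | zero => simp
  | tmul x c =>
    induction x using TensorProduct.induction_on with
    | zero => simp
    | tmul p q => simp [mu23_tmul, s23_tmul, mul_comm]
    | add x y hx hy => simp [TensorProduct.add_tmul, hx, hy]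
  | add x y hx hy => simp [hx, hy]

lemma s23_s23 (b : B3 A) : s23 A (s23 A b) = b := by
  induction b using TensorProduct.induction_on with
  | zero => simp
  | tmul x c =>
    induction x using TensorProduct.induction_on with
    | zero => simp
    | tmul p q => simp [s23_tmul]
    | add x y hx hy => simp [TensorProduct.add_tmul, hx, hy]
  | add x y hx hy => simp [hx, hy]

lemma mul'_eq_mu (x : A ⊗[ℂ] A) : LinearMap.mul' ℂ A x = mu A x := by
  induction x using TensorProduct.induction_on with
  | zero => simp
  | tmul a b => simp [Algebra.TensorProduct.lmul'_apply_tmul]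
  | add x y hx hy => simp [map_add, hx, hy]

lemma mu_mu12 (b : B3 A) : mu A (mu12 A b) = mu A (mu23 A b) := by
  induction b using TensorProduct.induction_on with
  | zero => simp
  | tmul x c =>
    induction x using TensorProduct.induction_on with
    | zero => simp
    | tmul p q => simp [mu12_tmul, mu23_tmul, Algebra.TensorProduct.lmul'_apply_tmul, mul_assoc]
    | add x y hx hy => simp [TensorProduct.add_tmul, hx, hy]
  | add x y hx hy => simp [hx, hy]

lemma mem_Kideal_iff (x : A ⊗[ℂ] A) : x ∈ KaehlerDifferential.ideal ℂ A ↔ mu A x = 0 :=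
  RingHom.mem_ker

lemma psi_apply (p : (A ⊗[ℂ] A) × (A ⊗[ℂ] A)) :
    psi A p = (KaehlerDifferential.ideal ℂ A).toCotangent ⟨Gmap A p, (Submodule.restrictScalars_mem ℂ _ _).mp (Gmap_mem A p)⟩ := rfl

lemma psi_eq_zero_iff (p : (A ⊗[ℂ] A) × (A ⊗[ℂ] A)) :
    psi A p = 0 ↔ Gmap A p ∈ (KaehlerDifferential.ideal ℂ A) ^ 2 := by
  rw [psi_apply]; exact Ideal.toCotangent_eq_zero _ _

lemma Gmap_tmul (a u b v : A) :
    Gmap A (a ⊗ₜ u, b ⊗ₜ v) =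
      (a ⊗ₜ u + a ⊗ₜ u) - ((a*u) ⊗ₜ 1 + (a*u) ⊗ₜ 1) - v ⊗ₜ b + (b*v) ⊗ₜ 1 := by
  simp [Gmap, two_smul, TensorProduct.smul_tmul']
  abel

lemma Gmap_apply (s t : A ⊗[ℂ] A) :
    Gmap A (s, t) = (s + s) - ((mu A s) ⊗ₜ 1 + (mu A s) ⊗ₜ 1)
      - TensorProduct.comm ℂ A A t + (mu A t) ⊗ₜ 1 := by
  simp [Gmap, two_smul, TensorProduct.smul_tmul', mul'_eq_mu]
  abel

lemma phi_add (b c : B3 A) : phi A (b + c) = phi A b + phi A c := by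
  simp [phi, Prod.ext_iff]

lemma claimA (s : A ⊗[ℂ] A) :
    ∃ b : B3 A, s23 A b = b ∧ mu12 A b = s ∧ mu23 A b = s + s - (mu A s) ⊗ₜ 1 := by
  induction s using TensorProduct.induction_on with
  | zero => exact ⟨0, by simp⟩
  | tmul p q =>
    refine ⟨(p ⊗ₜ q) ⊗ₜ 1 + (p ⊗ₜ 1) ⊗ₜ q - ((p*q) ⊗ₜ 1) ⊗ₜ 1, ?_, ?_, ?_⟩
    · simp [map_add, map_sub, s23_tmul]; abel
    · simp [map_add, map_sub, mu12_tmul, Algebra.TensorProduct.lmul'_apply_tmul]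
    · simp [map_add, map_sub, mu23_tmul, Algebra.TensorProduct.lmul'_apply_tmul]
  | add x y hx hy =>
    obtain ⟨b1, h1, h2, h3⟩ := hx
    obtain ⟨b2, g1, g2, g3⟩ := hy
    refine ⟨b1 + b2, by simp [map_add, h1, g1], by simp [map_add, h2, g2], ?_⟩
    rw [map_add, h3, g3, map_add, TensorProduct.add_tmul]
    abel

lemma claimB (k : A ⊗[ℂ] A) (hk : k ∈ (KaehlerDifferential.ideal ℂ A) ^ 2) :
    ∃ b : B3 A, s23 A b = b ∧ mu12 A b = 0 ∧ mu23 A b = k := by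
  rw [pow_two] at hk
  refine Submodule.mul_induction_on hk ?_ ?_
  · intro x hx y hy
    rw [mem_Kideal_iff] at hx hy
    refine ⟨(1/2 : ℂ) • ((x ⊗ₜ 1) * s23 A (y ⊗ₜ 1) + s23 A (x ⊗ₜ 1) * (y ⊗ₜ 1)), ?_, ?_, ?_⟩
    · rw [map_smul, map_add, map_mul, map_mul, s23_s23, s23_s23]
      ring_nf
    · rw [map_smul, map_add, map_mul, map_mul, mu12_incl, mu12_incl, hx, hy]
      simp
    · rw [map_smul, map_add, map_mul, map_mul, mu23_s23, mu23_s23, mu23_incl, mu23_incl]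
      rw [← two_smul ℂ (x*y), smul_smul]
      norm_num
  · rintro a b ⟨b1, h1, h2, h3⟩ ⟨b2, g1, g2, g3⟩
    exact ⟨b1 + b2, by simp [map_add, h1, g1], by simp [map_add, h2, g2],
      by simp [map_add, h3, g3]⟩

lemma ky_mem (q : A) : (1:A) ⊗ₜ q - q ⊗ₜ (1:A) ∈ KaehlerDifferential.ideal ℂ A := by
  rw [mem_Kideal_iff, map_sub]
  simp [Algebra.TensorProduct.lmul'_apply_tmul]

lemma psi_phi_s23 (b : B3 A) : psi A (phi A (s23 A b)) + psi A (phi A b) = 0 := by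
  induction b using TensorProduct.induction_on with
  | zero => simp [phi, Prod.mk_zero_zero]
  | tmul x c =>
    induction x using TensorProduct.induction_on with
    | zero => simp [phi, TensorProduct.zero_tmul, Prod.mk_zero_zero]
    | tmul p q =>
      rw [s23_tmul]
      have hphi1 : phi A ((p ⊗ₜ c) ⊗ₜ q) = ((p*c) ⊗ₜ q, (c*q) ⊗ₜ p) := by
        simp [phi, mu12_tmul, mu23_tmul]
      have hphi2 : phi A ((p ⊗ₜ q) ⊗ₜ c) = ((p*q) ⊗ₜ c, (q*c) ⊗ₜ p) := by
        simp [phi, mu12_tmul, mu23_tmul]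
      rw [hphi1, hphi2, ← map_add (psi A), psi_eq_zero_iff, map_add]
      have key : Gmap A ((p*c) ⊗ₜ q, (c*q) ⊗ₜ p) + Gmap A ((p*q) ⊗ₜ c, (q*c) ⊗ₜ p)
          = -((p ⊗ₜ (1:A)) * (((1:A) ⊗ₜ q - q ⊗ₜ (1:A)) * ((1:A) ⊗ₜ c - c ⊗ₜ (1:A)))
              + (p ⊗ₜ (1:A)) * (((1:A) ⊗ₜ q - q ⊗ₜ (1:A)) * ((1:A) ⊗ₜ c - c ⊗ₜ (1:A)))) := by
        simp only [Gmap_tmul, mul_sub, sub_mul, Algebra.TensorProduct.tmul_mul_tmul,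
          one_mul, mul_one, neg_add, neg_sub]
        ring_nf
      show Gmap A ((p*c) ⊗ₜ q, (c*q) ⊗ₜ p) + Gmap A ((p*q) ⊗ₜ c, (q*c) ⊗ₜ p)
          ∈ (KaehlerDifferential.ideal ℂ A) ^ 2
      rw [key]
      have hmem : ((1:A) ⊗ₜ q - q ⊗ₜ (1:A)) * ((1:A) ⊗ₜ c - c ⊗ₜ (1:A))
          ∈ (KaehlerDifferential.ideal ℂ A) ^ 2 := by
        rw [pow_two]; exact Ideal.mul_mem_mul (ky_mem A q) (ky_mem A c)
      exact neg_mem (add_mem (Ideal.mul_mem_left _ _ hmem) (Ideal.mul_mem_left _ _ hmem))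
    | add x y hx hy =>
      rw [TensorProduct.add_tmul, map_add, phi_add, phi_add, map_add, map_add]
      rw [show ∀ a b c d : Ω[A⁄ℂ], a + b + (c + d) = (a + c) + (b + d) from fun a b c d => by abel]
      rw [hx, hy, add_zero]
  | add x y hx hy =>
    rw [map_add, phi_add, phi_add, map_add, map_add]
    rw [show ∀ a b c d : Ω[A⁄ℂ], a + b + (c + d) = (a + c) + (b + d) from fun a b c d => by abel]
    rw [hx, hy, add_zero]

lemma psi_phi_zero (b : B3 A) (hb : s23 A b = b) : psi A (phi A b) = 0 := by
  have h := psi_phi_s23 A b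
  rw [hb] at h
  have h2 : (2:ℂ) • psi A (phi A b) = 0 := by rw [two_smul]; exact h
  have := congrArg (fun v => (1/2 : ℂ) • v) h2
  simpa [smul_smul] using this

lemma comm_comm' (x : A ⊗[ℂ] A) :
    TensorProduct.comm ℂ A A (TensorProduct.comm ℂ A A x) = x := by
  induction x using TensorProduct.induction_on with
  | zero => simp
  | tmul a b => simp
  | add x y hx hy => simp [map_add, hx, hy]

lemma part1 (b : B3 A) : phi A b ∈ M0 A := by
  rw [M0, LinearMap.mem_ker]
  simp only [LinearMap.sub_apply, LinearMap.coe_comp, Function.comp_apply, LinearMap.fst_apply,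
    LinearMap.snd_apply, phi]
  rw [mul'_eq_mu, mul'_eq_mu, acomm_eq, lmul'_comm, mu_mu12]
  exact sub_self _

/-- Let `A` be a smooth ℂ-algebra, `B = A⊗A⊗A`, `τ` the automorphism
swapping the last two tensor factors, and `J₃ = I₁₂ ∩ I₁₃ ∩ I₂₃`. With
`φ(b) = (μ₁₂(b), σ(μ₂₃(b)))`, `M₀ = {(s,t) : μ(s) = μ(t)}` and
`ψ(a⊗u, b⊗v) = [2(a⊗u) − 2(au⊗1) − (v⊗b) + (vb⊗1)] = 2a du − v db ∈ K/K²`,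
we have `φ(B^τ) ⊆ M₀` and the sequence
`0 → J₃ ∩ B^τ → B^τ →^φ M₀ →^ψ K/K² → 0` is exact: `ker φ = J₃ ∩ B^τ`,
`im φ = ker (ψ|M₀)`, and `ψ|M₀` is surjective. -/
theorem stmt13 (A : Type) [CommRing A] [Algebra ℂ A]
    [Algebra.FormallySmooth ℂ A] [Algebra.FinitePresentation ℂ A] :
    (∀ b : B3 A, s23 A b = b → phi A b ∈ M0 A) ∧
    (∀ b : B3 A, s23 A b = b → (phi A b = 0 ↔ b ∈ J3 A)) ∧
    {p : (A ⊗[ℂ] A) × (A ⊗[ℂ] A) | ∃ b : B3 A, s23 A b = b ∧ phi A b = p} =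
      {p : (A ⊗[ℂ] A) × (A ⊗[ℂ] A) | p ∈ M0 A ∧ psi A p = 0} ∧
    (∀ ω : Ω[A⁄ℂ], ∃ p ∈ M0 A, psi A p = ω) := by
  refine ⟨fun b _ => part1 A b, ?_, ?_, ?_⟩
  · -- kernel
    intro b hb
    constructor
    · intro h
      rw [Prod.ext_iff] at h
      obtain ⟨h1, h2⟩ := h
      simp only [phi] at h1 h2
      have h23 : mu23 A b = 0 := by
        apply (TensorProduct.comm ℂ A A).injective
        simpa using h2
      have h13 : mu13 A b = 0 := by
        show mu12 A (s23 A b) = 0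
        rw [hb]; exact h1
      exact ⟨⟨h1, h13⟩, h23⟩
    · rintro ⟨⟨h12, _⟩, h23⟩
      have h12' : mu12 A b = 0 := h12
      have h23' : mu23 A b = 0 := h23
      simp [phi, h12', h23', Prod.ext_iff]
  · -- exactness at M0
    ext p
    constructor
    · rintro ⟨b, hb, rfl⟩
      exact ⟨part1 A b, psi_phi_zero A b hb⟩
    · rintro ⟨hM0, hpsi⟩
      obtain ⟨s, t⟩ := p
      have hmu : mu A s = mu A t := by
        rw [M0, LinearMap.mem_ker] at hM0
        simp only [LinearMap.sub_apply, LinearMap.coe_comp, Function.comp_apply,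
          LinearMap.fst_apply, LinearMap.snd_apply, sub_eq_zero] at hM0
        rw [← mul'_eq_mu, ← mul'_eq_mu]; exact hM0
      rw [psi_eq_zero_iff] at hpsi
      obtain ⟨b1, hi1, h12, h23⟩ := claimA A s
      set k : A ⊗[ℂ] A := TensorProduct.comm ℂ A A t - (s + s - (mu A s) ⊗ₜ 1) with hkdef
      have hk : k = -(Gmap A (s, t)) := by
        rw [hkdef, Gmap_apply, hmu]
        abel
      have hkmem : k ∈ (KaehlerDifferential.ideal ℂ A) ^ 2 := by
        rw [hk]; exact neg_mem hpsi
      obtain ⟨b2, gi, g12, g23⟩ := claimB A k hkmem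
      refine ⟨b1 + b2, by rw [map_add, hi1, gi], ?_⟩
      have : mu23 A b1 + mu23 A b2 = TensorProduct.comm ℂ A A t := by
        rw [h23, g23, hkdef]; abel
      simp only [phi, map_add, h12, g12, add_zero, this, acomm_eq, comm_comm']
  · -- surjectivity
    intro ω
    obtain ⟨x, hx⟩ := Ideal.toCotangent_surjective (KaehlerDifferential.ideal ℂ A) ω
    refine ⟨((1/2 : ℂ) • (x : A ⊗[ℂ] A), 0), ?_, ?_⟩
    · rw [M0, LinearMap.mem_ker]
      have hx0 : mu A (x : A ⊗[ℂ] A) = 0 := (mem_Kideal_iff A _).mp x.2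
      simp only [LinearMap.sub_apply, LinearMap.coe_comp, Function.comp_apply,
        LinearMap.fst_apply, LinearMap.snd_apply, map_smul, map_zero]
      rw [mul'_eq_mu, hx0]
      simp
    · rw [psi_apply]
      have hx0 : mu A (x : A ⊗[ℂ] A) = 0 := (mem_Kideal_iff A _).mp x.2
      have hg : Gmap A ((1/2 : ℂ) • (x : A ⊗[ℂ] A), 0) = (x : A ⊗[ℂ] A) := by
        rw [Gmap_apply, map_smul, hx0, map_zero, map_zero]
        simp only [smul_zero, TensorProduct.zero_tmul, add_zero, sub_zero, neg_zero, map_zero]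
        rw [← add_smul]
        norm_num
      have : (⟨Gmap A ((1/2 : ℂ) • (x : A ⊗[ℂ] A), 0), Gmap_mem A _⟩ :
          ↥(KaehlerDifferential.ideal ℂ A)) = x := Subtype.ext hg
      rw [this, hx]

end DiagIdeals

end
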